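/- Let s ∈ ℝ^q, ω ≥ 0 and p ∈ (0,1]. Let X be a random vector in ℝ^q with E[X] = s and E[‖X − s‖²] ≤ ω‖s‖², and let U be a Bernoulli random variable with success probability p, independent of X. Then the random vector X̃ := (U/p)·X satisfies E[X̃] = s and E[‖X̃ − s‖²] ≤ ω_p‖s‖², where ω_p := ω + ((1−p)/p)(ω + 1). -/

import Mathlib

open MeasureTheory ProbabilityTheory

/-- Let `s ∈ ℝ^q`, `ω ≥ 0` and `p ∈ (0,1]`. Let `X` be a random vector
with `E[X] = s` and `E[‖X − s‖²] ≤ ω‖s‖²`, and let `U` be a Bernoulli random variable with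
success probability `p`, independent of `X`. Then `X̃ := (U/p) X` satisfies `E[X̃] = s` and
`E[‖X̃ − s‖²] ≤ ω_p ‖s‖²`, where `ω_p := ω + ((1−p)/p)(ω + 1)`. -/
theorem partial_participation_as_compression
    {q : ℕ} {Ω : Type*} [MeasurableSpace Ω] (Pr : Measure Ω) [IsProbabilityMeasure Pr]
    (s : EuclideanSpace ℝ (Fin q)) (ω p : ℝ) (hω : 0 ≤ ω) (hp0 : 0 < p) (hp1 : p ≤ 1)
    (X : Ω → EuclideanSpace ℝ (Fin q)) (U : Ω → ℝ)
    (hX_meas : Measurable X) (hU_meas : Measurable U)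
    (hX_int : Integrable X Pr)
    (hX_sq_int : Integrable (fun a => ‖X a - s‖ ^ 2) Pr)
    (hX_mean : ∫ a, X a ∂Pr = s)
    (hX_var : ∫ a, ‖X a - s‖ ^ 2 ∂Pr ≤ ω * ‖s‖ ^ 2)
    -- U is Bernoulli with success probability p, independent of X
    (hU_01 : ∀ a, U a = 0 ∨ U a = 1)
    (hU_p : Pr {a | U a = 1} = ENNReal.ofReal p)
    (hUX_indep : IndepFun U X Pr) :
    (∫ a, (U a / p) • X a ∂Pr = s)
      ∧ (∫ a, ‖(U a / p) • X a - s‖ ^ 2 ∂Pr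
          ≤ (ω + (1 - p) / p * (ω + 1)) * ‖s‖ ^ 2) := by
  have hpne : p ≠ 0 := hp0.ne'
  -- U equals the indicator of {U = 1}
  have hA_meas : MeasurableSet {a | U a = 1} := hU_meas (measurableSet_singleton 1)
  have hU_eq : U = fun a => ({a | U a = 1} : Set Ω).indicator (fun _ => (1:ℝ)) a := by
    funext a
    rcases hU_01 a with h | h <;> simp [Set.indicator_apply, h]
  -- mean of U is p
  have hU_mean : ∫ a, U a ∂Pr = p := by
    rw [show (fun a => U a) = fun a => ({a | U a = 1} : Set Ω).indicator (fun _ => (1:ℝ)) a from hU_eq]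
    rw [integral_indicator_const (1:ℝ) hA_meas, measureReal_def, hU_p, ENNReal.toReal_ofReal hp0.le]
    simp
  -- functions of U are bounded and integrable
  have hbU : ∀ g : ℝ → ℝ, ∃ C, ∀ a, ‖g (U a)‖ ≤ C := fun g =>
    ⟨max ‖g 0‖ ‖g 1‖, fun a => by
      rcases hU_01 a with h | h <;> simp [h, le_max_left, le_max_right]⟩
  have hgU_int : ∀ g : ℝ → ℝ, Measurable g → Integrable (fun a => g (U a)) Pr := by
    intro g hg
    obtain ⟨C, hC⟩ := hbU g
    exact Integrable.mono' (integrable_const C) (hg.comp hU_meas).aestronglyMeasurable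
      (Filter.Eventually.of_forall hC)
  have hU_int : Integrable U Pr := hgU_int id measurable_id
  -- master product rule from independence
  have hprod : ∀ (g : ℝ → ℝ) (φ : EuclideanSpace ℝ (Fin q) → ℝ), Measurable g → Measurable φ →
      Integrable (fun a => φ (X a)) Pr →
      ∫ a, g (U a) * φ (X a) ∂Pr = (∫ a, g (U a) ∂Pr) * ∫ a, φ (X a) ∂Pr := by
    intro g φ hg hφ hφint
    exact IndepFun.integral_fun_mul_eq_mul_integral (hUX_indep.comp hg hφ)
      (hgU_int g hg).aestronglyMeasurable hφint.aestronglyMeasurable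
  -- integrability of the rescaled vector
  have hXt_int : Integrable (fun a => (U a / p) • X a) Pr := by
    refine Integrable.mono' (hX_int.norm.const_mul (1/p))
      ((hU_meas.div_const p).aestronglyMeasurable.smul hX_int.aestronglyMeasurable)
      (Filter.Eventually.of_forall fun a => ?_)
    rw [norm_smul]
    rcases hU_01 a with h | h <;>
      simp [h, Real.norm_eq_abs, abs_div, abs_of_nonneg hp0.le] <;> positivity
  -- Part 1
  have part1 : ∫ a, (U a / p) • X a ∂Pr = s := by
    refine ext_inner_left ℝ fun v => ?_
    rw [← integral_inner hXt_int v]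
    have h1 : ∫ a, (inner ℝ v ((U a / p) • X a) : ℝ) ∂Pr
        = ∫ a, (fun u => u / p) (U a) * (fun x => (inner ℝ v x : ℝ)) (X a) ∂Pr :=
      integral_congr_ae (Filter.Eventually.of_forall fun a =>
        real_inner_smul_right v (X a) (U a / p))
    rw [h1, hprod (fun u => u / p) (fun x => (inner ℝ v x : ℝ))
        (measurable_id.div_const p) (continuous_const.inner continuous_id).measurable
        ((innerSL ℝ v).integrable_comp hX_int)]
    have h2 : ∫ a, U a / p ∂Pr = 1 := by rw [integral_div, hU_mean, div_self hpne]
    have h3 : ∫ a, (inner ℝ v (X a) : ℝ) ∂Pr = inner ℝ v s := by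
      rw [integral_inner hX_int v, hX_mean]
    rw [h2, h3, one_mul]
  refine ⟨part1, ?_⟩
  -- the mean of X - s is zero
  have hYint : Integrable (fun a => X a - s) Pr := hX_int.sub (integrable_const s)
  have hY_mean : ∫ a, (X a - s) ∂Pr = 0 := by
    rw [integral_sub hX_int (integrable_const s), hX_mean, integral_const]
    simp
  have hinner_int : Integrable (fun a => (inner ℝ s (X a - s) : ℝ)) Pr :=
    (innerSL ℝ s).integrable_comp hYint
  have hinner_mean : ∫ a, (inner ℝ s (X a - s) : ℝ) ∂Pr = 0 := by
    rw [integral_inner hYint s, hY_mean, inner_zero_right]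
  -- pointwise decomposition
  have hpt : ∀ a, ‖(U a / p) • X a - s‖ ^ 2
      = (U a / p) ^ 2 * ‖X a - s‖ ^ 2
        + (2 * ((U a / p) * (U a / p - 1))) * (inner ℝ s (X a - s) : ℝ)
        + (U a / p - 1) ^ 2 * ‖s‖ ^ 2 := by
    intro a
    have hd : (U a / p) • X a - s = (U a / p) • (X a - s) + (U a / p - 1) • s := by
      rw [smul_sub, sub_smul, one_smul]; abel
    rw [hd, @norm_add_sq_real, real_inner_smul_left, real_inner_smul_right,
      norm_smul, norm_smul, mul_pow, mul_pow, Real.norm_eq_abs, sq_abs,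
      Real.norm_eq_abs, sq_abs, real_inner_comm (X a - s) s]
    ring
  -- integrability of the three pieces
  have hf1 : Integrable (fun a => (U a / p) ^ 2 * ‖X a - s‖ ^ 2) Pr := by
    apply hX_sq_int.bdd_mul ((hU_meas.div_const p).pow_const 2).aestronglyMeasurable
    obtain ⟨C, hC⟩ := hbU (fun u => (u / p) ^ 2)
    exact Filter.Eventually.of_forall (hbU (fun u => (u / p) ^ 2)).choose_spec
  have hf2 : Integrable
      (fun a => (2 * ((U a / p) * (U a / p - 1))) * (inner ℝ s (X a - s) : ℝ)) Pr := by
    apply hinner_int.bdd_mul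
    · exact (((hU_meas.div_const p).mul ((hU_meas.div_const p).sub measurable_const)).const_mul
        2).aestronglyMeasurable
    · obtain ⟨C, hC⟩ := hbU (fun u => 2 * ((u / p) * (u / p - 1)))
      exact Filter.Eventually.of_forall (hbU (fun u => 2 * ((u / p) * (u / p - 1)))).choose_spec
  have hf3 : Integrable (fun a => (U a / p - 1) ^ 2 * ‖s‖ ^ 2) Pr := by
    apply (integrable_const (‖s‖ ^ 2)).bdd_mul
      (((hU_meas.div_const p).sub measurable_const).pow_const 2).aestronglyMeasurable
    obtain ⟨C, hC⟩ := hbU (fun u => (u / p - 1) ^ 2)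
    exact Filter.Eventually.of_forall (hbU (fun u => (u / p - 1) ^ 2)).choose_spec
  -- compute the three integrals
  have hsq_mean : ∫ a, (U a / p) ^ 2 ∂Pr = 1 / p := by
    have he : ∀ a, (U a / p) ^ 2 = (1 / p ^ 2) * U a := by
      intro a; rcases hU_01 a with h | h <;> field_simp [h] <;> simp [h]
    rw [integral_congr_ae (Filter.Eventually.of_forall he), integral_const_mul, hU_mean]
    field_simp
  have hA1 : ∫ a, (U a / p) ^ 2 * ‖X a - s‖ ^ 2 ∂Pr
      = (1 / p) * ∫ a, ‖X a - s‖ ^ 2 ∂Pr := by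
    rw [hprod (fun u => (u / p) ^ 2) (fun x => ‖x - s‖ ^ 2)
      ((measurable_id.div_const p).pow_const 2)
      (((continuous_id.sub continuous_const).norm.pow 2).measurable) hX_sq_int, hsq_mean]
  have hA2 : ∫ a, (2 * ((U a / p) * (U a / p - 1))) * (inner ℝ s (X a - s) : ℝ) ∂Pr = 0 := by
    rw [hprod (fun u => 2 * ((u / p) * (u / p - 1))) (fun x => (inner ℝ s (x - s) : ℝ))
      (((measurable_id.div_const p).mul ((measurable_id.div_const p).sub
        measurable_const)).const_mul 2)
      ((continuous_const.inner (continuous_id.sub continuous_const)).measurable) hinner_int,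
      hinner_mean, mul_zero]
  have hA3 : ∫ a, (U a / p - 1) ^ 2 * ‖s‖ ^ 2 ∂Pr = (1 / p - 1) * ‖s‖ ^ 2 := by
    have he : ∀ a, (U a / p - 1) ^ 2 = (1 / p ^ 2 - 2 / p) * U a + 1 := by
      intro a; rcases hU_01 a with h | h <;> rw [h] <;> field_simp <;> ring
    rw [integral_mul_const]
    congr 1
    rw [integral_congr_ae (Filter.Eventually.of_forall he),
      integral_add ((hU_int.const_mul _)) (integrable_const 1),
      integral_const_mul, hU_mean, integral_const, probReal_univ]
    field_simp
    ring
  -- put everything together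
  have hsplit : ∫ a, ‖(U a / p) • X a - s‖ ^ 2 ∂Pr
      = (1 / p) * (∫ a, ‖X a - s‖ ^ 2 ∂Pr) + (1 / p - 1) * ‖s‖ ^ 2 := by
    have hf12 : Integrable (fun a => (U a / p) ^ 2 * ‖X a - s‖ ^ 2
        + (2 * ((U a / p) * (U a / p - 1))) * (inner ℝ s (X a - s) : ℝ)) Pr := hf1.add hf2
    rw [integral_congr_ae (Filter.Eventually.of_forall hpt), integral_add hf12 hf3,
      integral_add hf1 hf2, hA1, hA2, hA3]
    ring
  rw [hsplit]
  have hI : (1 / p) * (∫ a, ‖X a - s‖ ^ 2 ∂Pr) ≤ (1 / p) * (ω * ‖s‖ ^ 2) :=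
    mul_le_mul_of_nonneg_left hX_var (by positivity)
  have heq : (1 / p) * (ω * ‖s‖ ^ 2) + (1 / p - 1) * ‖s‖ ^ 2
      = (ω + (1 - p) / p * (ω + 1)) * ‖s‖ ^ 2 := by
    field_simp
    ring
  linarith
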